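/- For any commutative ring R, the symplectic Lie algebra sp(2g,R) with the conjugation action of Sp(2g,R) is isomorphic as an Sp(2g,R)-module to the divided square D²(U_R) of the natural module U_R = R^{2g}, i.e., the submodule of symmetric tensors in U_R ⊗ U_R, where X ∈ Sp(2g,R) acts on Y ∈ sp(2g,R) by Y ↦ XYX⁻¹ and u⊗u is identified with the endomorphism x ↦ ⟨u,x⟩u for the symplectic form ⟨·,·⟩. -/

import Mathlib

open Matrix TensorProduct

/-- The standard symplectic form matrix `J = [[0, I], [-I, 0]]`. -/
def Jmat (g : ℕ) (R : Type*) [CommRing R] :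
    Matrix (Fin g ⊕ Fin g) (Fin g ⊕ Fin g) R :=
  Matrix.fromBlocks 0 1 (-1) 0

set_option synthInstance.maxHeartbeats 1000000
set_option maxHeartbeats 1000000

namespace Stmt11Aux

variable (g : ℕ) (R : Type*) [CommRing R]

abbrev n := Fin g ⊕ Fin g

lemma J_mul_J : Jmat g R * Jmat g R = -1 := by
  have : (-1 : Matrix (n g) (n g) R) = Matrix.fromBlocks (-1) 0 0 (-1) := by
    rw [← Matrix.fromBlocks_one, Matrix.fromBlocks_neg]; simp
  rw [this, Jmat, Matrix.fromBlocks_multiply]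
  simp

lemma J_transpose : (Jmat g R)ᵀ = -Jmat g R := by
  rw [Jmat, Matrix.fromBlocks_transpose, Matrix.fromBlocks_neg]
  simp

lemma JJ' (A : Matrix (n g) (n g) R) : Jmat g R * (Jmat g R * A) = -A := by
  rw [← mul_assoc, J_mul_J, neg_one_mul]

lemma vecMulVec_vecMul (u w : n g → R) (M : Matrix (n g) (n g) R) :
    vecMulVec u (w ᵥ* M) = vecMulVec u w * M := by
  ext i j
  simp [vecMulVec_apply, Matrix.mul_apply, Matrix.vecMul, dotProduct,
    Finset.mul_sum, mul_add, mul_assoc]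

lemma mulVec_vecMulVec (u w : n g → R) (M : Matrix (n g) (n g) R) :
    vecMulVec (M *ᵥ u) w = M * vecMulVec u w := by
  ext i j
  simp [vecMulVec_apply, Matrix.mul_apply, Matrix.mulVec, dotProduct,
    Finset.sum_mul, add_mul, mul_assoc]

lemma transpose_vecMulVec (u w : n g → R) :
    (vecMulVec u w)ᵀ = vecMulVec w u := by
  ext i j
  simp [vecMulVec_apply, mul_comm]

/-- The bilinear map `(u, v) ↦ vecMulVec u (v ᵥ* J)`. -/
noncomputable def phiBil : ((n g) → R) →ₗ[R] ((n g) → R) →ₗ[R] Matrix (n g) (n g) R :=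
  LinearMap.mk₂ R (fun u v => vecMulVec u (v ᵥ* Jmat g R))
    (fun u u' v => by ext i j; simp [vecMulVec_apply, add_mul])
    (fun c u v => by ext i j; simp [vecMulVec_apply, mul_assoc])
    (fun u v v' => by ext i j; simp [vecMulVec_apply, Matrix.add_vecMul, mul_add])
    (fun c u v => by
      ext i j
      simp [vecMulVec_apply, Matrix.smul_vecMul, smul_eq_mul, mul_left_comm])

/-- The linear map `U ⊗ U → Matrices`, `u ⊗ v ↦ vecMulVec u (v ᵥ* J)`. -/
noncomputable def Phi : (((n g) → R) ⊗[R] ((n g) → R)) →ₗ[R] Matrix (n g) (n g) R :=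
  TensorProduct.lift (phiBil g R)

@[simp] lemma Phi_tmul (u v : (n g) → R) :
    Phi g R (u ⊗ₜ[R] v) = vecMulVec u (v ᵥ* Jmat g R) := rfl

/-- The inverse map: `Y ↦ ∑ (Y * (-J)) i j • eᵢ ⊗ eⱼ`. -/
noncomputable def Psi : Matrix (n g) (n g) R →ₗ[R] (((n g) → R) ⊗[R] ((n g) → R)) where
  toFun Y := ∑ i, ∑ j, (Y * (-Jmat g R)) i j •
      ((Pi.single i (1 : R)) ⊗ₜ[R] (Pi.single j (1 : R)))
  map_add' Y Z := by
    simp only [add_mul, Matrix.add_apply, add_smul, Finset.sum_add_distrib]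
  map_smul' c Y := by
    simp only [Matrix.smul_mul, Matrix.smul_apply, smul_eq_mul, mul_smul,
      Finset.smul_sum, RingHom.id_apply]

lemma single_vecMulVec (i j : n g) :
    vecMulVec (Pi.single i (1 : R)) (Pi.single j (1 : R)) = Matrix.single i j 1 := by
  ext a b
  by_cases h : i = a <;> by_cases h' : j = b <;>
    simp [vecMulVec_apply, Pi.single_apply, Matrix.single, h, h', eq_comm]

lemma Psi_vecMulVec (u v : (n g) → R) :
    Psi g R (vecMulVec u v * (Jmat g R)) = u ⊗ₜ[R] v := by
  have hJ : Jmat g R * -Jmat g R = 1 := by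
    rw [mul_neg, J_mul_J, neg_neg]
  simp only [Psi, LinearMap.coe_mk, AddHom.coe_mk, mul_assoc, hJ, mul_one]
  conv_rhs => rw [← Finset.univ_sum_single u, ← Finset.univ_sum_single v]
  rw [sum_tmul]
  rw [Finset.sum_congr rfl fun i _ => tmul_sum _ _ _]
  refine Finset.sum_congr rfl fun i _ => Finset.sum_congr rfl fun j _ => ?_
  have hu : (Pi.single i (u i) : n g → R) = u i • (Pi.single i 1 : n g → R) := by
    rw [← Pi.single_smul, smul_eq_mul, mul_one]
  have hv : (Pi.single j (v j) : n g → R) = v j • (Pi.single j 1 : n g → R) := by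
    rw [← Pi.single_smul, smul_eq_mul, mul_one]
  rw [hu, hv]
  simp [smul_tmul', tmul_smul, smul_smul, vecMulVec_apply, mul_comm]

lemma Psi_Phi : (Psi g R).comp (Phi g R) = LinearMap.id := by
  apply TensorProduct.ext'
  intro u v
  simp only [LinearMap.comp_apply, Phi_tmul, LinearMap.id_apply]
  rw [vecMulVec_vecMul, Psi_vecMulVec]

lemma Phi_Psi : (Phi g R).comp (Psi g R) = LinearMap.id := by
  apply LinearMap.ext; intro Y
  simp only [LinearMap.comp_apply, LinearMap.id_apply, Psi, LinearMap.coe_mk, AddHom.coe_mk,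
    map_sum, _root_.map_smul, Phi_tmul]
  have key : ∀ i j : n g, vecMulVec (Pi.single i (1:R)) ((Pi.single j (1:R)) ᵥ* Jmat g R)
      = Matrix.single i j 1 * Jmat g R := fun i j => by
    rw [vecMulVec_vecMul, single_vecMulVec]
  simp only [key, ← Matrix.smul_mul, Matrix.smul_single, smul_eq_mul, mul_one]
  rw [Finset.sum_congr rfl fun i _ => (Finset.sum_mul _ _ _).symm, ← Finset.sum_mul,
    ← Matrix.matrix_eq_sum_single, mul_assoc, Matrix.neg_mul, J_mul_J, neg_neg, mul_one]

/-- The linear equivalence `U ⊗ U ≃ Matrices`. -/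
noncomputable def PhiE : (((n g) → R) ⊗[R] ((n g) → R)) ≃ₗ[R] Matrix (n g) (n g) R :=
  LinearEquiv.ofLinear (Phi g R) (Psi g R) (Phi_Psi g R) (Psi_Phi g R)

@[simp] lemma PhiE_apply (t) : PhiE g R t = Phi g R t := rfl

lemma Phi_comm (t : ((n g) → R) ⊗[R] ((n g) → R)) :
    Phi g R (TensorProduct.comm R _ _ t) = Jmat g R * (Phi g R t)ᵀ * Jmat g R := by
  induction t with
  | zero => simp
  | tmul u v =>
      simp only [comm_tmul, Phi_tmul]
      rw [vecMulVec_vecMul, vecMulVec_vecMul, Matrix.transpose_mul, transpose_vecMulVec,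
        J_transpose]
      simp only [Matrix.neg_mul, Matrix.mul_neg, mul_assoc, JJ', neg_neg]
  | add x y hx hy =>
      simp only [map_add, Matrix.transpose_add, mul_add, add_mul, hx, hy]

/-- The linear map whose kernel is `sp`. -/
def Lsp : Matrix (n g) (n g) R →ₗ[R] Matrix (n g) (n g) R where
  toFun Y := Jmat g R * Y + Yᵀ * Jmat g R
  map_add' Y Z := by
    simp only [mul_add, Matrix.transpose_add, add_mul]
    abel
  map_smul' c Y := by
    simp [Matrix.transpose_smul, Matrix.mul_smul, Matrix.smul_mul, smul_add]

noncomputable def sp : Submodule R (Matrix (n g) (n g) R) := LinearMap.ker (Lsp g R)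

noncomputable def D2 : Submodule R (((n g) → R) ⊗[R] ((n g) → R)) :=
  LinearMap.ker ((TensorProduct.comm R ((n g) → R) ((n g) → R)).toLinearMap - LinearMap.id)

lemma mem_sp (Y : Matrix (n g) (n g) R) :
    Y ∈ sp g R ↔ Jmat g R * Y + Yᵀ * Jmat g R = 0 := Iff.rfl

lemma mem_D2 (t : ((n g) → R) ⊗[R] ((n g) → R)) :
    t ∈ D2 g R ↔ TensorProduct.comm R _ _ t = t := by
  rw [D2, LinearMap.mem_ker, LinearMap.sub_apply, LinearMap.id_apply, sub_eq_zero]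
  exact Iff.rfl

lemma sp_iff (Y : Matrix (n g) (n g) R) :
    Y ∈ sp g R ↔ Jmat g R * Yᵀ * Jmat g R = Y := by
  rw [mem_sp]
  constructor
  · intro h
    have h' : Yᵀ * Jmat g R = -(Jmat g R * Y) := eq_neg_of_add_eq_zero_right h
    rw [mul_assoc, h', mul_neg, JJ', neg_neg]
  · intro h
    have : Jmat g R * Y = -(Yᵀ * Jmat g R) := by
      conv_lhs => rw [← h]
      rw [mul_assoc, JJ']
    rw [this, neg_add_cancel]

lemma map_D2 : (D2 g R).map (PhiE g R : _ →ₗ[R] _) = sp g R := by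
  ext Y
  simp only [Submodule.mem_map, LinearEquiv.coe_coe, PhiE_apply]
  constructor
  · rintro ⟨t, ht, rfl⟩
    rw [mem_D2] at ht
    rw [sp_iff, ← Phi_comm, ht]
  · intro hY
    refine ⟨(PhiE g R).symm Y, ?_, ?_⟩
    · rw [mem_D2]
      apply (PhiE g R).injective
      have hPt : Phi g R ((PhiE g R).symm Y) = Y := (PhiE g R).apply_symm_apply Y
      show Phi g R _ = Phi g R _
      rw [Phi_comm, hPt, (sp_iff g R Y).mp hY]
    · exact (PhiE g R).apply_symm_apply Y

lemma Phi_equivariant (X X' : Matrix (n g) (n g) R)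
    (hX : Xᵀ * Jmat g R * X = Jmat g R) (h1 : X * X' = 1)
    (s : ((n g) → R) ⊗[R] ((n g) → R)) :
    Phi g R (TensorProduct.map X.mulVecLin X.mulVecLin s) = X * Phi g R s * X' := by
  have hXJ : Xᵀ * Jmat g R = Jmat g R * X' := by
    calc Xᵀ * Jmat g R = Xᵀ * Jmat g R * (X * X') := by rw [h1, mul_one]
    _ = (Xᵀ * Jmat g R * X) * X' := by rw [← mul_assoc]
    _ = Jmat g R * X' := by rw [hX]
  induction s with
  | zero => simp
  | tmul u v =>
      simp only [map_tmul, Matrix.mulVecLin_apply, Phi_tmul]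
      rw [Matrix.vecMul_mulVec, hXJ, ← Matrix.vecMul_vecMul, vecMulVec_vecMul,
        mulVec_vecMulVec]
  | add x y hx hy =>
      simp only [map_add, mul_add, add_mul, hx, hy]

end Stmt11Aux

/-- The symplectic Lie algebra `sp(2g,R)`, with the conjugation action of `Sp(2g,R)`,
is isomorphic as an `Sp(2g,R)`-module to the divided square `D²(U_R)` (the submodule of
symmetric tensors in `U_R ⊗ U_R`, `U_R = R^{2g}`), where `u ⊗ u` corresponds to the
endomorphism `x ↦ ⟨u,x⟩ u` for the symplectic form `⟨x,y⟩ = xᵀ J y`. -/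
theorem stmt11 (g : ℕ) (hg : 1 ≤ g) (R : Type*) [CommRing R] :
    ∃ (sp : Submodule R (Matrix (Fin g ⊕ Fin g) (Fin g ⊕ Fin g) R))
      (D2 : Submodule R (((Fin g ⊕ Fin g) → R) ⊗[R] ((Fin g ⊕ Fin g) → R))),
      (sp : Set (Matrix (Fin g ⊕ Fin g) (Fin g ⊕ Fin g) R)) =
        {Y | Jmat g R * Y + Yᵀ * Jmat g R = 0} ∧
      (D2 : Set (((Fin g ⊕ Fin g) → R) ⊗[R] ((Fin g ⊕ Fin g) → R))) =
        {t | TensorProduct.comm R ((Fin g ⊕ Fin g) → R) ((Fin g ⊕ Fin g) → R) t = t} ∧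
      ∃ φ : D2 ≃ₗ[R] sp,
        (∀ (u : (Fin g ⊕ Fin g) → R) (h : u ⊗ₜ[R] u ∈ D2),
          ((φ ⟨u ⊗ₜ[R] u, h⟩ : sp) : Matrix (Fin g ⊕ Fin g) (Fin g ⊕ Fin g) R) =
            Matrix.vecMulVec u (Matrix.vecMul u (Jmat g R))) ∧
        (∀ X X' : Matrix (Fin g ⊕ Fin g) (Fin g ⊕ Fin g) R,
          Xᵀ * Jmat g R * X = Jmat g R → X * X' = 1 → X' * X = 1 →
          ∀ t t' : D2,
            TensorProduct.map X.mulVecLin X.mulVecLin (t : _) = (t' : _) →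
            ((φ t' : sp) : Matrix (Fin g ⊕ Fin g) (Fin g ⊕ Fin g) R) =
              X * ((φ t : sp) : Matrix (Fin g ⊕ Fin g) (Fin g ⊕ Fin g) R) * X') := by
  refine ⟨Stmt11Aux.sp g R, Stmt11Aux.D2 g R, ?_, ?_, ?_⟩
  · ext Y; exact Stmt11Aux.mem_sp g R Y
  · ext t; exact Stmt11Aux.mem_D2 g R t
  · refine ⟨(Stmt11Aux.PhiE g R).ofSubmodules _ _ (Stmt11Aux.map_D2 g R), ?_, ?_⟩
    · intro u h
      rw [LinearEquiv.ofSubmodules_apply]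
      simp only [Stmt11Aux.PhiE_apply, Stmt11Aux.Phi_tmul]
    · intro X X' hX h1 h2 t t' hmap
      rw [LinearEquiv.ofSubmodules_apply, LinearEquiv.ofSubmodules_apply]
      simp only [Stmt11Aux.PhiE_apply]
      rw [← hmap, Stmt11Aux.Phi_equivariant g R X X' hX h1]
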